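/- In the non-idempotent intersection type system R^ex for the λ-calculus, every typable λ-term is strongly normalizing under β-reduction. -/

import Mathlib

/-- Untyped λ-terms with de Bruijn indices. -/
inductive Tm : Type
  | var : ℕ → Tm
  | app : Tm → Tm → Tm
  | lam : Tm → Tm

namespace Tm

/-- Lift (shift by `d`) the free variables of index `≥ k`. -/
def lift (d : ℕ) : ℕ → Tm → Tm
  | k, .var m => if m < k then .var m else .var (m + d)
  | k, .app a b => .app (lift d k a) (lift d k b)
  | k, .lam a => .lam (lift d (k + 1) a)

/-- Capture-avoiding substitution of `s` for the variable of index `k`. -/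
def subst (s : Tm) : ℕ → Tm → Tm
  | k, .var m => if m < k then .var m else if m = k then lift k 0 s else .var (m - 1)
  | k, .app a b => .app (subst s k a) (subst s k b)
  | k, .lam a => .lam (subst s (k + 1) a)

end Tm

/-- One step of β-reduction (anywhere in the term). -/
inductive Beta : Tm → Tm → Prop
  | beta (t u : Tm) : Beta (.app (.lam t) u) (Tm.subst u 0 t)
  | appL {a a' : Tm} (b : Tm) : Beta a a' → Beta (.app a b) (.app a' b)
  | appR (a : Tm) {b b' : Tm} : Beta b b' → Beta (.app a b) (.app a b')
  | lam {a a' : Tm} : Beta a a' → Beta (.lam a) (.lam a')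

/-- Non-idempotent intersection types: `α ::= γ | [α₁,…,αₙ] → α`, where `γ`
ranges over a set `A` of type atoms and a finite multiset of types is
represented by a list of types. -/
inductive Ty (A : Type) : Type
  | atom : A → Ty A
  | arrow : List (Ty A) → Ty A → Ty A

/-- Environments map (de Bruijn) variables to finite multisets of types. -/
abbrev Env (A : Type) := ℕ → Multiset (Ty A)

/-- Extend an environment with a multiset of types for the freshly bound
variable `0`. -/
def consEnv {A : Type} (a : Multiset (Ty A)) (Γ : Env A) : Env A
  | 0 => a
  | m + 1 => Γ m

/-- Pointwise sum of an environment and a list of environments. -/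
def sumEnv {A : Type} (Γ₀ : Env A) (Γs : List (Env A)) : Env A :=
  fun m => Γ₀ m + (Γs.map fun Γ => Γ m).sum

/-- The typing judgements of System R^ex: the `var` rule types a variable `x`
with `x : [α]` and arbitrary multisets on the other variables; the `abs` rule
binds the multiset of types of the abstracted variable; the `app` rule requires
`n ≥ 1` typings of the argument, one for each element of the multiset
`[α₁,…,αₙ]`, and sums the environments pointwise. -/
inductive TypingRex (A : Type) : Env A → Tm → Ty A → Prop
  | var (Γ : Env A) (x : ℕ) (α : Ty A) (h : Γ x = {α}) : TypingRex A Γ (.var x) α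
  | abs {Γ : Env A} {a : List (Ty A)} {t : Tm} {α : Ty A}
      (h : TypingRex A (consEnv (↑a) Γ) t α) :
      TypingRex A Γ (.lam t) (.arrow a α)
  | app {Γ₀ : Env A} {Γs : List (Env A)} {v u : Tm} {as : List (Ty A)} {α : Ty A}
      (hv : TypingRex A Γ₀ v (.arrow as α))
      (hne : as ≠ [])
      (hlen : Γs.length = as.length)
      (hu : ∀ i (hi : i < as.length) (hj : i < Γs.length),
        TypingRex A (Γs.get ⟨i, hj⟩) u (as.get ⟨i, hi⟩)) :
      TypingRex A (sumEnv Γ₀ Γs) (.app v u) α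


section SNProof
variable {A : Type}

/-- The environment with a single type at a single variable. -/
def singleEnv (x : ℕ) (α : Ty A) : Env A := fun m => if m = x then {α} else 0

/-- System W: like R^ex but variables are typed tightly and weakening is
performed at abstractions (`c ≤ ↑a`).  Every R^ex derivation embeds into W
(with a pointwise smaller environment), and W enjoys type-preserving
quantitative subject reduction. -/
inductive W (A : Type) : Env A → Tm → Ty A → Type
  | var (x : ℕ) (α : Ty A) : W A (singleEnv x α) (.var x) α
  | abs {Γ : Env A} {c : Multiset (Ty A)} {a : List (Ty A)} {t : Tm} {α : Ty A}
      (h : W A (consEnv c Γ) t α) (hc : c ≤ (↑a : Multiset (Ty A))) :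
      W A Γ (.lam t) (.arrow a α)
  | app {Γ₀ : Env A} {Γs : List (Env A)} {v u : Tm} {as : List (Ty A)} {α : Ty A}
      (hv : W A Γ₀ v (.arrow as α)) (hne : as ≠ [])
      (hlen : Γs.length = as.length)
      (hu : ∀ i (hi : i < as.length) (hj : i < Γs.length),
        W A (Γs.get ⟨i, hj⟩) u (as.get ⟨i, hi⟩)) :
      W A (sumEnv Γ₀ Γs) (.app v u) α

/-- Size of a W-derivation. -/
noncomputable def wsize : ∀ {Γ : Env A} {t : Tm} {α : Ty A}, W A Γ t α → ℕ
  | _, _, _, .var _ _ => 1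
  | _, _, _, .abs h _ => wsize h + 1
  | _, _, _, .app (as := as) (hlen := hlen) hv _ hu =>
      wsize hv + (∑ i : Fin as.length, wsize (hu i i.2 (lt_of_lt_of_eq i.2 hlen.symm))) + 1

lemma wsize_var {x : ℕ} {α : Ty A} : wsize (W.var (A := A) x α) = 1 := rfl

lemma wsize_abs {Γ : Env A} {c : Multiset (Ty A)} {a : List (Ty A)} {t : Tm} {α : Ty A}
    (h : W A (consEnv c Γ) t α) (hc : c ≤ (↑a : Multiset (Ty A))) :
    wsize (W.abs h hc) = wsize h + 1 := rfl

lemma wsize_app {Γ₀ : Env A} {Γs : List (Env A)} {v u : Tm} {as : List (Ty A)} {α : Ty A}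
    (hv : W A Γ₀ v (.arrow as α)) (hne : as ≠ [])
    (hlen : Γs.length = as.length)
    (hu : ∀ i (hi : i < as.length) (hj : i < Γs.length),
        W A (Γs.get ⟨i, hj⟩) u (as.get ⟨i, hi⟩)) :
    wsize (W.app hv hne hlen hu)
      = wsize hv + (∑ i : Fin as.length, wsize (hu i i.2 (lt_of_lt_of_eq i.2 hlen.symm))) + 1 :=
  rfl

/-- Transport a derivation along an equality of environments. -/
def castEnv {Γ Γ' : Env A} {t α} (h : Γ = Γ') (d : W A Γ t α) : W A Γ' t α := h ▸ d

lemma wsize_castEnv {Γ Γ' : Env A} {t α} (h : Γ = Γ') (d : W A Γ t α) :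
    wsize (castEnv h d) = wsize d := by subst h; rfl

/-- Transport a derivation along an equality of types. -/
def castTy {Γ : Env A} {t} {α α' : Ty A} (h : α = α') (d : W A Γ t α) : W A Γ t α' := h ▸ d

lemma wsize_castTy {Γ : Env A} {t} {α α' : Ty A} (h : α = α') (d : W A Γ t α) :
    wsize (castTy h d) = wsize d := by subst h; rfl

def liftEnv (c k : ℕ) (Γ : Env A) : Env A :=
  fun m => if m < k then Γ m else if m < k + c then 0 else Γ (m - c)

lemma liftEnv_zero (k : ℕ) (Γ : Env A) : liftEnv 0 k Γ = Γ := by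
  funext m
  simp only [liftEnv, Nat.add_zero]
  by_cases h : m < k
  · rw [if_pos h]
  · rw [if_neg h, if_neg h, Nat.sub_zero]

lemma liftEnv_succ_succ (k : ℕ) (Γ : Env A) (m : ℕ) :
    liftEnv (k + 1) 0 Γ (m + 1) = liftEnv k 0 Γ m := by
  simp only [liftEnv, Nat.not_lt_zero, if_false, Nat.zero_add]
  by_cases h : m < k
  · rw [if_pos (by omega), if_pos h]
  · rw [if_neg (by omega), if_neg h]
    congr 1
    omega

/-- Lifting preserves typability with the lifted environment, and size. -/
lemma lift_W {Γ : Env A} {t α} (d : W A Γ t α) :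
    ∀ (c k : ℕ), ∃ d' : W A (liftEnv c k Γ) (Tm.lift c k t) α, wsize d' = wsize d := by
  induction d with
  | var x α =>
      intro c k
      by_cases hx : x < k
      · have hl : Tm.lift c k (Tm.var x) = Tm.var x := by simp [Tm.lift, hx]
        rw [hl]
        have he : liftEnv c k (singleEnv x α) = singleEnv (A := A) x α := by
          funext m
          simp only [liftEnv, singleEnv]
          by_cases h1 : m < k
          · rw [if_pos h1]
          · rw [if_neg h1]
            by_cases h2 : m < k + c
            · rw [if_pos h2, if_neg (by omega)]
            · rw [if_neg h2, if_neg (by omega), if_neg (by omega)]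
        rw [he]
        exact ⟨.var x α, rfl⟩
      · have hl : Tm.lift c k (Tm.var x) = Tm.var (x + c) := by simp [Tm.lift, hx]
        rw [hl]
        have he : liftEnv c k (singleEnv x α) = singleEnv (A := A) (x + c) α := by
          funext m
          simp only [liftEnv, singleEnv]
          by_cases h1 : m < k
          · rw [if_pos h1, if_neg (by omega), if_neg (by omega)]
          · rw [if_neg h1]
            by_cases h2 : m < k + c
            · rw [if_pos h2, if_neg (by omega)]
            · rw [if_neg h2]
              by_cases h3 : m - c = x
              · rw [if_pos h3, if_pos (by omega)]
              · rw [if_neg h3, if_neg (by omega)]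
        rw [he]
        exact ⟨.var (x + c) α, rfl⟩
  | abs h hc ih =>
      rename_i Γ cc a t α
      intro c k
      obtain ⟨d', hs⟩ := ih c (k + 1)
      have he : liftEnv c (k + 1) (consEnv cc Γ) = consEnv cc (liftEnv c k Γ) := by
        funext m
        cases m with
        | zero => simp [liftEnv, consEnv]
        | succ m =>
            show liftEnv c (k + 1) (consEnv cc Γ) (m + 1) = liftEnv c k Γ m
            simp only [liftEnv]
            by_cases h1 : m < k
            · rw [if_pos (by omega : m + 1 < k + 1), if_pos h1]
              rfl
            · by_cases h2 : m < k + c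
              · rw [if_neg (by omega), if_pos (by omega), if_neg h1, if_pos h2]
              · rw [if_neg (by omega), if_neg (by omega), if_neg h1, if_neg h2]
                have h3 : m + 1 - c = (m - c) + 1 := by omega
                rw [h3]
                rfl
      refine ⟨.abs (castEnv he d') hc, ?_⟩
      show wsize (castEnv he d') + 1 = _
      rw [wsize_castEnv, hs]
      rfl
  | app hv hne hlen hu ihv ihu =>
      rename_i Γ₀ Γs v u as α
      intro c k
      obtain ⟨d₀', hs₀⟩ := ihv c k
      have HD := fun (i : ℕ) (hi : i < as.length) (hj : i < Γs.length) => ihu i hi hj c k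
      choose D hD using HD
      have hlen' : (Γs.map (liftEnv c k)).length = as.length := by simpa using hlen
      have hgetmap : ∀ (i : ℕ) (hj : i < Γs.length) (hj' : i < (Γs.map (liftEnv c k)).length),
          liftEnv c k (Γs.get ⟨i, hj⟩) = (Γs.map (liftEnv c k)).get ⟨i, hj'⟩ := by
        intro i hj hj'
        simp
      set hu' : ∀ i (hi : i < as.length) (hj' : i < (Γs.map (liftEnv c k)).length),
          W A ((Γs.map (liftEnv c k)).get ⟨i, hj'⟩) (Tm.lift c k u) (as.get ⟨i, hi⟩) :=
        fun i hi hj' =>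
          castEnv (hgetmap i (by simpa using hj') hj') (D i hi (by simpa using hj')) with hhu'
      have he : sumEnv (liftEnv c k Γ₀) (Γs.map (liftEnv c k)) = liftEnv c k (sumEnv Γ₀ Γs) := by
        funext m
        simp only [sumEnv, liftEnv, List.map_map, Function.comp_def]
        by_cases h1 : m < k
        · simp [h1]
        · by_cases h2 : m < k + c
          · simp [h1, h2, List.map_const', List.sum_replicate]
          · simp [h1, h2]
      refine ⟨castEnv he (.app d₀' hne hlen' hu'), ?_⟩
      show wsize (castEnv he (W.app d₀' hne hlen' hu')) = _
      rw [wsize_castEnv, wsize_app, wsize_app, hs₀]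
      congr 1
      congr 1
      apply Finset.sum_congr rfl
      intro i _
      rw [hhu', wsize_castEnv]
      exact hD i i.2 _

/-! ### Multiset helper lemmas -/

lemma sum_le_sum_of_le {M : Type} [AddCommMonoid M] [PartialOrder M] [CanonicallyOrderedAdd M]
    {s t : Multiset M} (h : s ≤ t) : s.sum ≤ t.sum := by
  obtain ⟨r, rfl⟩ := Multiset.le_iff_exists_add.1 h
  rw [Multiset.sum_add]
  exact le_add_right le_rfl

lemma map_split_add {σ β : Type} {f : σ → β} :
    ∀ {s : Multiset σ} {t u : Multiset β}, s.map f = t + u →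
    ∃ s₁ s₂, s = s₁ + s₂ ∧ s₁.map f = t ∧ s₂.map f = u := by
  intro s t
  induction t using Multiset.induction generalizing s with
  | empty =>
      intro u h
      exact ⟨0, s, by simp, by simp, by simpa using h⟩
  | cons b t ih =>
      intro u h
      have hb : b ∈ s.map f := by rw [h]; simp
      obtain ⟨a, ha, hfa⟩ := Multiset.mem_map.1 hb
      obtain ⟨s', rfl⟩ := Multiset.exists_cons_of_mem ha
      rw [Multiset.map_cons, hfa, Multiset.cons_add] at h
      have h' : s'.map f = t + u := (Multiset.cons_inj_right _).1 h
      obtain ⟨s₁, s₂, rfl, h1, h2⟩ := ih h'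
      exact ⟨a ::ₘ s₁, s₂, by rw [Multiset.cons_add], by rw [Multiset.map_cons, hfa, h1], h2⟩

lemma map_pullback_le {σ β : Type} {f : σ → β} {s : Multiset σ} {t : Multiset β}
    (h : t ≤ s.map f) : ∃ s' ≤ s, s'.map f = t := by
  obtain ⟨r, hr⟩ := Multiset.le_iff_exists_add.1 h
  obtain ⟨s₁, s₂, rfl, h1, _⟩ := map_split_add hr
  exact ⟨s₁, Multiset.le_add_right _ _, h1⟩

lemma map_split_list {σ β : Type} {f : σ → β} (g : Env A → Multiset β) :
    ∀ (L : List (Env A)) {s : Multiset σ}, s.map f = (L.map g).sum →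
    ∃ parts : List (Multiset σ), parts.length = L.length ∧ parts.sum = s ∧
      ∀ i (hi : i < L.length) (hj : i < parts.length),
        (parts.get ⟨i, hj⟩).map f = g (L.get ⟨i, hi⟩) := by
  intro L
  induction L with
  | nil =>
      intro s h
      have h0 : Multiset.map f s = 0 := by simpa using h
      have hs0 : s = 0 := Multiset.map_eq_zero.1 h0
      exact ⟨[], rfl, by simp [hs0], by intro i hi; simp at hi⟩
  | cons Γi L ih =>
      intro s h
      rw [List.map_cons, List.sum_cons] at h
      obtain ⟨s₁, s₂, rfl, h1, h2⟩ := map_split_add h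
      obtain ⟨parts, hl, hsum, hget⟩ := ih h2
      refine ⟨s₁ :: parts, by simp [hl], by simp [hsum], ?_⟩
      intro i hi hj
      cases i with
      | zero => simpa using h1
      | succ i => exact hget i (by simpa using hi) (by simpa using hj)

lemma mem_listSum {x : Ty A} {s : Multiset (Ty A)} :
    ∀ {L : List (Multiset (Ty A))}, s ∈ L → x ∈ s → x ∈ L.sum := by
  intro L
  induction L with
  | nil => simp
  | cons a L ih =>
      intro hs hx
      rw [List.sum_cons, Multiset.mem_add]
      rcases List.mem_cons.1 hs with h | h
      · exact Or.inl (h ▸ hx)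
      · exact Or.inr (ih h hx)

lemma map_sum_fin {γ : Type} {β : Type} [AddCommMonoid β] (L : List γ) (f : γ → β)
    {n : ℕ} (h : L.length = n) :
    (L.map f).sum = ∑ i : Fin n, f (L.get ⟨i, lt_of_lt_of_eq i.2 h.symm⟩) := by
  subst h
  have h1 : L.map f = List.ofFn (fun i : Fin L.length => f (L.get i)) := by
    rw [show (fun i : Fin L.length => f (L.get i)) = f ∘ L.get from rfl, ← List.map_ofFn,
      List.ofFn_get]
  rw [h1, List.sum_ofFn]

/-! ### The substitution lemma -/

lemma sum_map_listSum {σ M : Type} [AddCommMonoid M] (f : σ → M) :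
    ∀ (L : List (Multiset σ)), ((L.sum).map f).sum = (L.map fun s => (s.map f).sum).sum := by
  intro L
  induction L with
  | nil => simp
  | cons a L ih => simp [List.sum_cons, Multiset.map_add, Multiset.sum_add, ih]

/-- A typed copy of the substituted term `u`. -/
structure Cop (A : Type) (u : Tm) : Type where
  ty : Ty A
  env : Env A
  der : W A env u ty

/-- The quantitative substitution lemma for system W. -/
lemma subst_W (u : Tm) {Γ : Env A} {t : Tm} {α : Ty A} (d : W A Γ t α) :
    ∀ (k : ℕ) (S : Multiset (Cop A u)), S.map Cop.ty = Γ k →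
    ∃ (Γ' : Env A) (d' : W A Γ' (Tm.subst u k t) α),
      (∀ m, Γ' m ≤ (if m < k then Γ m else Γ (m + 1))
          + (S.map fun e => liftEnv k 0 e.env m).sum)
      ∧ wsize d' ≤ wsize d + (S.map fun e => wsize e.der).sum := by
  induction d with
  | var x α =>
      intro k S hS
      by_cases hx : x < k
      · have hS0 : S = 0 := Multiset.map_eq_zero.1 (by
          rw [hS]; simp only [singleEnv]; rw [if_neg (by omega)])
        subst hS0
        have hsub : Tm.subst u k (Tm.var x) = Tm.var x := by simp [Tm.subst, hx]
        rw [hsub]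
        refine ⟨singleEnv x α, .var x α, ?_, by simp [wsize_var]⟩
        intro m
        by_cases hm : m < k
        · rw [if_pos hm]
          exact le_add_right le_rfl
        · rw [if_neg hm]
          have h0 : singleEnv (A := A) x α m = 0 := by
            simp only [singleEnv]; rw [if_neg (by omega)]
          rw [h0]
          exact zero_le
      · by_cases hxe : x = k
        · subst hxe
          have hS1 : S.map Cop.ty = {α} := by
            rw [hS]; simp [singleEnv]
          obtain ⟨e, hSe, hety⟩ := Multiset.map_eq_singleton.1 hS1
          obtain ⟨dl, hdl⟩ := lift_W e.der x 0
          have hsub : Tm.subst u x (Tm.var x) = Tm.lift x 0 u := by simp [Tm.subst]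
          rw [hsub]
          refine ⟨liftEnv x 0 e.env, castTy hety dl, ?_, ?_⟩
          · intro m
            have h1 : (S.map fun e' => liftEnv x 0 e'.env m).sum = liftEnv x 0 e.env m := by
              rw [hSe]; simp
            rw [h1]
            exact le_add_self
          · rw [wsize_castTy, hdl, hSe]
            simp [wsize_var]
        · have hS0 : S = 0 := Multiset.map_eq_zero.1 (by
            rw [hS]; simp only [singleEnv]; rw [if_neg (by omega)])
          subst hS0
          have hsub : Tm.subst u k (Tm.var x) = Tm.var (x - 1) := by simp [Tm.subst, hx, hxe]
          rw [hsub]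
          refine ⟨singleEnv (x - 1) α, .var (x - 1) α, ?_, by simp [wsize_var]⟩
          intro m
          by_cases hm : m < k
          · rw [if_pos hm]
            have h0 : singleEnv (A := A) (x - 1) α m = 0 := by
              simp only [singleEnv]; rw [if_neg (by omega)]
            rw [h0]
            exact zero_le
          · rw [if_neg hm]
            by_cases hmx : m = x - 1
            · have h1 : singleEnv (A := A) (x - 1) α m = {α} := by
                simp only [singleEnv]; rw [if_pos hmx]
              have h2 : singleEnv (A := A) x α (m + 1) = {α} := by
                simp only [singleEnv]; rw [if_pos (by omega)]
              rw [h1, h2]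
              exact le_add_right le_rfl
            · have h1 : singleEnv (A := A) (x - 1) α m = 0 := by
                simp only [singleEnv]; rw [if_neg hmx]
              rw [h1]
              exact zero_le
  | abs h hc ih =>
      rename_i Γ cc a t α
      intro k S hS
      obtain ⟨Γ'', d'', hbound, hsz⟩ := ih (k + 1) S hS
      have hc' : Γ'' 0 ≤ cc := by
        have h1 := hbound 0
        rw [if_pos (Nat.succ_pos k)] at h1
        have h2 : (S.map fun e => liftEnv (k + 1) 0 e.env 0).sum = 0 := by
          have hz : ∀ e ∈ S, liftEnv (k + 1) 0 e.env 0 = (0 : Multiset (Ty A)) := by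
            intro e _
            simp only [liftEnv]
            rw [if_neg (by omega), if_pos (by omega)]
          rw [Multiset.map_congr rfl hz]
          simp
        rw [h2, add_zero] at h1
        exact h1
      have he : consEnv (Γ'' 0) (fun m => Γ'' (m + 1)) = Γ'' := by
        funext m; cases m <;> rfl
      have hsub : Tm.subst u k (Tm.lam t) = Tm.lam (Tm.subst u (k + 1) t) := by
        simp [Tm.subst]
      rw [hsub]
      refine ⟨fun m => Γ'' (m + 1), .abs (castEnv he.symm d'') (le_trans hc' hc), ?_, ?_⟩
      · intro m
        have h1 := hbound (m + 1)
        have h2 : (S.map fun e => liftEnv (k + 1) 0 e.env (m + 1)).sum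
            = (S.map fun e => liftEnv k 0 e.env m).sum := by
          rw [Multiset.map_congr rfl (fun e _ => liftEnv_succ_succ k e.env m)]
        rw [h2] at h1
        by_cases hm : m < k
        · rw [if_pos hm]
          rw [if_pos (by omega)] at h1
          exact h1
        · rw [if_neg hm]
          rw [if_neg (by omega)] at h1
          exact h1
      · rw [wsize_abs, wsize_abs, wsize_castEnv]
        omega
  | app hv hne hlen hu ihv ihu =>
      rename_i Γ₀ Γs v w as α
      intro k S hS
      obtain ⟨S₀, Srest, rfl, hS₀, hSrest⟩ := map_split_add (f := Cop.ty) hS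
      obtain ⟨parts, hplen, hpsum, hpget⟩ := map_split_list (fun Γi => Γi k) Γs hSrest
      have hplen' : parts.length = as.length := hplen.trans hlen
      obtain ⟨Γ₀', d₀', hb₀, hsz₀⟩ := ihv k S₀ hS₀
      have HD := fun (i : ℕ) (hi : i < as.length) (hj : i < Γs.length) =>
        ihu i hi hj k (parts.get ⟨i, lt_of_lt_of_eq hj hplen.symm⟩)
          (hpget i hj (lt_of_lt_of_eq hj hplen.symm))
      choose G D hbD hszD using HD
      set Γs' : List (Env A) :=
        List.ofFn (fun i : Fin as.length => G i i.2 (lt_of_lt_of_eq i.2 hlen.symm)) with hΓs'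
      have hlen' : Γs'.length = as.length := by simp [hΓs']
      have hget' : ∀ (i : ℕ) (hi : i < as.length) (hj' : i < Γs'.length),
          Γs'.get ⟨i, hj'⟩ = G i hi (lt_of_lt_of_eq hi hlen.symm) := by
        intro i hi hj'
        simp [hΓs', List.get_ofFn]
      set hu' : ∀ i (hi : i < as.length) (hj' : i < Γs'.length),
          W A (Γs'.get ⟨i, hj'⟩) (Tm.subst u k w) (as.get ⟨i, hi⟩) :=
        fun i hi hj' =>
          castEnv (hget' i hi hj').symm (D i hi (lt_of_lt_of_eq hi hlen.symm)) with hhu'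
      have hsub : Tm.subst u k (Tm.app v w) = Tm.app (Tm.subst u k v) (Tm.subst u k w) := by
        simp [Tm.subst]
      rw [hsub]
      refine ⟨sumEnv Γ₀' Γs', .app d₀' hne hlen' hu', ?_, ?_⟩
      · intro m
        have hsplit : ((S₀ + Srest).map fun e => liftEnv k 0 e.env m).sum
            = (S₀.map fun e => liftEnv k 0 e.env m).sum
              + ∑ i : Fin as.length,
                  ((parts.get ⟨i, lt_of_lt_of_eq i.2 hplen'.symm⟩).map
                    fun e => liftEnv k 0 e.env m).sum := by
          rw [Multiset.map_add, Multiset.sum_add, ← hpsum,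
            sum_map_listSum (fun e : Cop A u => liftEnv k 0 e.env m) parts,
            map_sum_fin parts _ hplen']
        have hLHS : sumEnv Γ₀' Γs' m
            = Γ₀' m + ∑ i : Fin as.length, Γs'.get ⟨i, lt_of_lt_of_eq i.2 hlen'.symm⟩ m := by
          show Γ₀' m + (Γs'.map (fun Γi => Γi m)).sum = _
          rw [map_sum_fin Γs' (fun Γi => Γi m) hlen']
        by_cases hm : m < k
        · rw [if_pos hm, hsplit, hLHS]
          have hRHS : sumEnv Γ₀ Γs m
              = Γ₀ m + ∑ i : Fin as.length, Γs.get ⟨i, lt_of_lt_of_eq i.2 hlen.symm⟩ m := by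
            show Γ₀ m + (Γs.map (fun Γi => Γi m)).sum = _
            rw [map_sum_fin Γs (fun Γi => Γi m) hlen]
          rw [hRHS]
          have hb0' : Γ₀' m ≤ Γ₀ m + (S₀.map fun e => liftEnv k 0 e.env m).sum := by
            have h1 := hb₀ m
            rw [if_pos hm] at h1
            exact h1
          have hbi : ∀ i : Fin as.length,
              Γs'.get ⟨i, lt_of_lt_of_eq i.2 hlen'.symm⟩ m
                ≤ Γs.get ⟨i, lt_of_lt_of_eq i.2 hlen.symm⟩ m
                  + ((parts.get ⟨i, lt_of_lt_of_eq i.2 hplen'.symm⟩).map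
                      fun e => liftEnv k 0 e.env m).sum := by
            intro i
            rw [hget' i i.2 _]
            have h1 := hbD i i.2 (lt_of_lt_of_eq i.2 hlen.symm) m
            rw [if_pos hm] at h1
            exact h1
          calc Γ₀' m + ∑ i : Fin as.length, Γs'.get ⟨i, lt_of_lt_of_eq i.2 hlen'.symm⟩ m
              ≤ (Γ₀ m + (S₀.map fun e => liftEnv k 0 e.env m).sum)
                + ∑ i : Fin as.length,
                    (Γs.get ⟨i, lt_of_lt_of_eq i.2 hlen.symm⟩ m
                      + ((parts.get ⟨i, lt_of_lt_of_eq i.2 hplen'.symm⟩).map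
                          fun e => liftEnv k 0 e.env m).sum) :=
                add_le_add hb0' (Finset.sum_le_sum fun i _ => hbi i)
            _ = _ := by rw [Finset.sum_add_distrib]; abel
        · rw [if_neg hm, hsplit, hLHS]
          have hRHS : sumEnv Γ₀ Γs (m + 1)
              = Γ₀ (m + 1)
                + ∑ i : Fin as.length, Γs.get ⟨i, lt_of_lt_of_eq i.2 hlen.symm⟩ (m + 1) := by
            show Γ₀ (m + 1) + (Γs.map (fun Γi => Γi (m + 1))).sum = _
            rw [map_sum_fin Γs (fun Γi => Γi (m + 1)) hlen]
          rw [hRHS]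
          have hb0' : Γ₀' m ≤ Γ₀ (m + 1) + (S₀.map fun e => liftEnv k 0 e.env m).sum := by
            have h1 := hb₀ m
            rw [if_neg hm] at h1
            exact h1
          have hbi : ∀ i : Fin as.length,
              Γs'.get ⟨i, lt_of_lt_of_eq i.2 hlen'.symm⟩ m
                ≤ Γs.get ⟨i, lt_of_lt_of_eq i.2 hlen.symm⟩ (m + 1)
                  + ((parts.get ⟨i, lt_of_lt_of_eq i.2 hplen'.symm⟩).map
                      fun e => liftEnv k 0 e.env m).sum := by
            intro i
            rw [hget' i i.2 _]
            have h1 := hbD i i.2 (lt_of_lt_of_eq i.2 hlen.symm) m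
            rw [if_neg hm] at h1
            exact h1
          calc Γ₀' m + ∑ i : Fin as.length, Γs'.get ⟨i, lt_of_lt_of_eq i.2 hlen'.symm⟩ m
              ≤ (Γ₀ (m + 1) + (S₀.map fun e => liftEnv k 0 e.env m).sum)
                + ∑ i : Fin as.length,
                    (Γs.get ⟨i, lt_of_lt_of_eq i.2 hlen.symm⟩ (m + 1)
                      + ((parts.get ⟨i, lt_of_lt_of_eq i.2 hplen'.symm⟩).map
                          fun e => liftEnv k 0 e.env m).sum) :=
                add_le_add hb0' (Finset.sum_le_sum fun i _ => hbi i)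
            _ = _ := by rw [Finset.sum_add_distrib]; abel
      · have hsplit : ((S₀ + Srest).map fun e => wsize e.der).sum
            = (S₀.map fun e => wsize e.der).sum
              + ∑ i : Fin as.length,
                  ((parts.get ⟨i, lt_of_lt_of_eq i.2 hplen'.symm⟩).map
                    fun e => wsize e.der).sum := by
          rw [Multiset.map_add, Multiset.sum_add, ← hpsum,
            sum_map_listSum (fun e : Cop A u => wsize e.der) parts,
            map_sum_fin parts _ hplen']
        rw [wsize_app, wsize_app, hsplit]
        have hbi : ∀ i : Fin as.length,
            wsize (hu' i i.2 (lt_of_lt_of_eq i.2 hlen'.symm))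
              ≤ wsize (hu i i.2 (lt_of_lt_of_eq i.2 hlen.symm))
                + ((parts.get ⟨i, lt_of_lt_of_eq i.2 hplen'.symm⟩).map
                    fun e => wsize e.der).sum := by
          intro i
          rw [hhu', wsize_castEnv]
          exact hszD i i.2 (lt_of_lt_of_eq i.2 hlen.symm)
        have hsum : ∑ i : Fin as.length, wsize (hu' i i.2 (lt_of_lt_of_eq i.2 hlen'.symm))
            ≤ ∑ i : Fin as.length,
                (wsize (hu i i.2 (lt_of_lt_of_eq i.2 hlen.symm))
                  + ((parts.get ⟨i, lt_of_lt_of_eq i.2 hplen'.symm⟩).map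
                      fun e => wsize e.der).sum) :=
          Finset.sum_le_sum fun i _ => hbi i
        rw [Finset.sum_add_distrib] at hsum
        omega

/-! ### Subject reduction and strong normalization -/

lemma subject_reduction_W {t t' : Tm} (h : Beta t t') :
    ∀ {Γ : Env A} {α : Ty A} (d : W A Γ t α),
    ∃ (Γ' : Env A), (∀ m, Γ' m ≤ Γ m) ∧ ∃ d' : W A Γ' t' α, wsize d' < wsize d := by
  induction h with
  | beta t u =>
      intro Γ α d
      cases d with
      | app hv hne hlen hu =>
        rename_i Γ₀ Γs as
        cases hv with
        | abs dt hc =>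
          rename_i c
          set fullS : Multiset (Cop A u) := ↑(List.ofFn (fun i : Fin as.length =>
            (⟨as.get i, Γs.get ⟨i, lt_of_lt_of_eq i.2 hlen.symm⟩,
              hu i i.2 (lt_of_lt_of_eq i.2 hlen.symm)⟩ : Cop A u))) with hfullS
          have hmapfull : fullS.map Cop.ty = (↑as : Multiset (Ty A)) := by
            rw [hfullS, Multiset.map_coe, List.map_ofFn]
            rw [show (Cop.ty ∘ fun i : Fin as.length =>
              (⟨as.get i, Γs.get ⟨i, lt_of_lt_of_eq i.2 hlen.symm⟩,
                hu i i.2 (lt_of_lt_of_eq i.2 hlen.symm)⟩ : Cop A u))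
              = fun i : Fin as.length => as.get i from rfl, List.ofFn_get]
          have hsub : c ≤ fullS.map Cop.ty := by rw [hmapfull]; exact hc
          obtain ⟨S', hS'le, hS'map⟩ := map_pullback_le hsub
          obtain ⟨Γ', d', hbound, hsz⟩ := subst_W u dt 0 S' hS'map
          refine ⟨Γ', ?_, d', ?_⟩
          · intro m
            have h1 := hbound m
            rw [if_neg (Nat.not_lt_zero m)] at h1
            simp only [liftEnv_zero] at h1
            have h2 : (S'.map fun e => e.env m).sum ≤ (fullS.map fun e => e.env m).sum :=
              sum_le_sum_of_le (Multiset.map_le_map hS'le)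
            have h3 : (fullS.map fun e => e.env m).sum = (Γs.map (fun Γi => Γi m)).sum := by
              rw [hfullS, Multiset.map_coe, List.map_ofFn]
              rw [show ((fun e : Cop A u => e.env m) ∘ fun i : Fin as.length =>
                (⟨as.get i, Γs.get ⟨i, lt_of_lt_of_eq i.2 hlen.symm⟩,
                  hu i i.2 (lt_of_lt_of_eq i.2 hlen.symm)⟩ : Cop A u))
                = fun i : Fin as.length => Γs.get ⟨i, lt_of_lt_of_eq i.2 hlen.symm⟩ m from rfl]
              rw [Multiset.sum_coe, List.sum_ofFn, map_sum_fin Γs (fun Γi => Γi m) hlen]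
            show Γ' m ≤ Γ₀ m + (Γs.map (fun Γi => Γi m)).sum
            calc Γ' m ≤ consEnv c Γ₀ (m + 1) + (S'.map fun e => e.env m).sum := h1
              _ ≤ Γ₀ m + (Γs.map (fun Γi => Γi m)).sum := by
                  rw [← h3]
                  exact add_le_add_right h2 _
          · have h2 : (S'.map fun e => wsize e.der).sum
                ≤ (fullS.map fun e => wsize e.der).sum :=
              sum_le_sum_of_le (Multiset.map_le_map hS'le)
            have h3 : (fullS.map fun e => wsize e.der).sum
                = ∑ i : Fin as.length, wsize (hu i i.2 (lt_of_lt_of_eq i.2 hlen.symm)) := by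
              rw [hfullS, Multiset.map_coe, List.map_ofFn]
              rw [show ((fun e : Cop A u => wsize e.der) ∘ fun i : Fin as.length =>
                (⟨as.get i, Γs.get ⟨i, lt_of_lt_of_eq i.2 hlen.symm⟩,
                  hu i i.2 (lt_of_lt_of_eq i.2 hlen.symm)⟩ : Cop A u))
                = fun i : Fin as.length => wsize (hu i i.2 (lt_of_lt_of_eq i.2 hlen.symm))
                from rfl]
              rw [Multiset.sum_coe, List.sum_ofFn]
            rw [wsize_app, wsize_abs]
            omega
  | appL b hb ih =>
      intro Γ α d
      cases d with
      | app hv hne hlen hu =>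
          obtain ⟨Γ₀', hle₀, d₀', hlt⟩ := ih hv
          refine ⟨sumEnv Γ₀' _, ?_, .app d₀' hne hlen hu, ?_⟩
          · intro m
            exact add_le_add_left (hle₀ m) _
          · rw [wsize_app, wsize_app]
            omega
  | appR a hb ih =>
      intro Γ α d
      cases d with
      | app hv hne hlen hu =>
          rename_i Γ₀ Γs as
          choose G hleG D hltD using fun i hi hj => ih (hu i hi hj)
          set Γs' : List (Env A) :=
            List.ofFn (fun i : Fin as.length => G i i.2 (lt_of_lt_of_eq i.2 hlen.symm))
            with hΓs'
          have hlen' : Γs'.length = as.length := by simp [hΓs']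
          have hget' : ∀ (i : ℕ) (hi : i < as.length) (hj' : i < Γs'.length),
              Γs'.get ⟨i, hj'⟩ = G i hi (lt_of_lt_of_eq hi hlen.symm) := by
            intro i hi hj'
            simp [hΓs', List.get_ofFn]
          set hu' : ∀ i (hi : i < as.length) (hj' : i < Γs'.length),
              W A (Γs'.get ⟨i, hj'⟩) _ (as.get ⟨i, hi⟩) :=
            fun i hi hj' =>
              castEnv (hget' i hi hj').symm (D i hi (lt_of_lt_of_eq hi hlen.symm)) with hhu'
          refine ⟨sumEnv Γ₀ Γs', ?_, .app hv hne hlen' hu', ?_⟩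
          · intro m
            show Γ₀ m + (Γs'.map (fun Γi => Γi m)).sum ≤ Γ₀ m + (Γs.map (fun Γi => Γi m)).sum
            rw [map_sum_fin Γs' (fun Γi => Γi m) hlen', map_sum_fin Γs (fun Γi => Γi m) hlen]
            refine add_le_add_right (Finset.sum_le_sum ?_) _
            intro i _
            rw [hget' i i.2 _]
            exact hleG i i.2 _ m
          · rw [wsize_app, wsize_app]
            have hpos : 0 < as.length := List.length_pos_iff.2 hne
            haveI : Nonempty (Fin as.length) := ⟨⟨0, hpos⟩⟩
            have hsum : (∑ i : Fin as.length, wsize (hu' i i.2 (lt_of_lt_of_eq i.2 hlen'.symm)))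
                < ∑ i : Fin as.length, wsize (hu i i.2 (lt_of_lt_of_eq i.2 hlen.symm)) := by
              apply Finset.sum_lt_sum_of_nonempty Finset.univ_nonempty
              intro i _
              rw [hhu', wsize_castEnv]
              exact hltD i i.2 _
            omega
  | lam hb ih =>
      intro Γ α d
      cases d with
      | abs dt hc =>
          rename_i c
          obtain ⟨Γ'', hle, d'', hlt⟩ := ih dt
          have he : consEnv (Γ'' 0) (fun m => Γ'' (m + 1)) = Γ'' := by
            funext m; cases m <;> rfl
          refine ⟨fun m => Γ'' (m + 1), fun m => hle (m + 1),
            .abs (castEnv he.symm d'') (le_trans (hle 0) hc), ?_⟩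
          rw [wsize_abs, wsize_abs, wsize_castEnv]
          omega

lemma toW {Γ : Env A} {t : Tm} {α : Ty A} (h : TypingRex A Γ t α) :
    ∃ Γ' : Env A, (∀ m, Γ' m ≤ Γ m) ∧ Nonempty (W A Γ' t α) := by
  induction h with
  | var Γ x α h =>
      refine ⟨singleEnv x α, ?_, ⟨W.var x α⟩⟩
      intro m
      by_cases hm : m = x
      · subst hm; rw [h]; simp [singleEnv]
      · simp [singleEnv, hm]
  | abs h ih =>
      rename_i Γ a t α
      obtain ⟨Γ', hle, ⟨d⟩⟩ := ih
      have he : consEnv (Γ' 0) (fun m => Γ' (m + 1)) = Γ' := by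
        funext m; cases m <;> rfl
      exact ⟨fun m => Γ' (m + 1), fun m => hle (m + 1),
        ⟨W.abs (castEnv he.symm d) (hle 0)⟩⟩
  | app hv hne hlen hu ihv ihu =>
      rename_i Γ₀ Γs v u as α
      obtain ⟨Γ₀', hle₀, ⟨d₀⟩⟩ := ihv
      choose G hleG DG using ihu
      set Γs' : List (Env A) :=
        List.ofFn (fun i : Fin as.length => G i i.2 (lt_of_lt_of_eq i.2 hlen.symm)) with hΓs'
      have hlen' : Γs'.length = as.length := by simp [hΓs']
      have hget' : ∀ (i : ℕ) (hi : i < as.length) (hj' : i < Γs'.length),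
          Γs'.get ⟨i, hj'⟩ = G i hi (lt_of_lt_of_eq hi hlen.symm) := by
        intro i hi hj'
        simp [hΓs', List.get_ofFn]
      set hu' : ∀ i (hi : i < as.length) (hj' : i < Γs'.length),
          W A (Γs'.get ⟨i, hj'⟩) u (as.get ⟨i, hi⟩) :=
        fun i hi hj' =>
          castEnv (hget' i hi hj').symm ((DG i hi (lt_of_lt_of_eq hi hlen.symm)).some) with hhu'
      refine ⟨sumEnv Γ₀' Γs', ?_, ⟨W.app d₀ hne hlen' hu'⟩⟩
      intro m
      show Γ₀' m + (Γs'.map (fun Γi => Γi m)).sum ≤ Γ₀ m + (Γs.map (fun Γi => Γi m)).sum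
      rw [map_sum_fin Γs' (fun Γi => Γi m) hlen', map_sum_fin Γs (fun Γi => Γi m) hlen]
      refine add_le_add (hle₀ m) (Finset.sum_le_sum ?_)
      intro i _
      rw [hget' i i.2 _]
      exact hleG i i.2 _ m

lemma no_infinite_chain : ∀ (n : ℕ) (t : Tm),
    (∃ (Γ : Env A) (α : Ty A) (d : W A Γ t α), wsize d ≤ n) →
    ¬ ∃ f : ℕ → Tm, f 0 = t ∧ ∀ i, Beta (f i) (f (i + 1)) := by
  intro n
  induction n using Nat.strong_induction_on with
  | _ n ih =>
    rintro t ⟨Γ, α, d, hd⟩ ⟨f, hf0, hstep⟩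
    have hb : Beta t (f 1) := by rw [← hf0]; exact hstep 0
    obtain ⟨Γ', _, d', hlt⟩ := subject_reduction_W hb d
    exact ih (wsize d') (lt_of_lt_of_le hlt hd) (f 1) ⟨Γ', α, d', le_rfl⟩
      ⟨fun i => f (i + 1), rfl, fun i => hstep (i + 1)⟩

end SNProof

/-- every λ-term typable in System R^ex is strongly normalizing
under β-reduction: there is no infinite β-reduction sequence from it. -/
theorem Rex_typable_SN {A : Type} [Countable A] {Γ : Env A} {t : Tm} {α : Ty A}
    (h : TypingRex A Γ t α) :
    ¬ ∃ f : ℕ → Tm, f 0 = t ∧ ∀ i, Beta (f i) (f (i + 1)) := by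
  obtain ⟨Γ', hle, ⟨d⟩⟩ := toW h
  exact no_infinite_chain (wsize d) t ⟨Γ', α, d, le_rfl⟩
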